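/- Let G be a 3-tough (K₂ ∪ 3K₁)-free graph with a longest cycle C. If C is not a hamiltonian cycle, then G − V(C) has at most 3 components. -/

import Mathlib

open SimpleGraph

/-- The disjoint union of an edge (on vertices 0,1) and `k` isolated vertices. -/
def K2uK (k : ℕ) : SimpleGraph (Fin (k + 2)) :=
  SimpleGraph.fromRel (fun a b => a = 0 ∧ b = 1)

/-- `G` contains no induced copy of `H`. -/
def HFree {α β : Type*} (H : SimpleGraph α) (G : SimpleGraph β) : Prop :=
  IsEmpty (H ↪g G)

/-- The number of connected components of a graph. -/
noncomputable def numComp {V : Type*} (G : SimpleGraph V) : ℕ :=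
  Nat.card G.ConnectedComponent

/-- `S` is a cut set of `G`: removing `S` leaves at least two components. -/
def IsCutSet {V : Type*} (G : SimpleGraph V) (S : Set V) : Prop :=
  2 ≤ numComp (G.induce (Sᶜ : Set V))

/-- `G` is `t`-tough: for every cut set `S`, `t * c(G-S) ≤ |S|`. -/
noncomputable def Tough {V : Type*} [Fintype V] (t : ℝ) (G : SimpleGraph V) : Prop :=
  ∀ S : Set V, IsCutSet G S →
    t * (numComp (G.induce (Sᶜ : Set V)) : ℝ) ≤ (Nat.card S : ℝ)

section Aux
set_option linter.unusedSectionVars false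

variable {V : Type*} [Fintype V] {G : SimpleGraph V}

/-- pick three pairwise distinct elements from a finset of card ≥ 3 -/
lemma three_distinct {α : Type*} [DecidableEq α] (s : Finset α) (h : 3 ≤ s.card) :
    ∃ p ∈ s, ∃ q ∈ s, ∃ r ∈ s, p ≠ q ∧ p ≠ r ∧ q ≠ r := by
  obtain ⟨p, hp⟩ := Finset.card_pos.mp (show 0 < s.card by omega)
  have h1 : 2 ≤ (s.erase p).card := by
    have := Finset.card_erase_of_mem hp; omega
  obtain ⟨q, hq⟩ := Finset.card_pos.mp (show 0 < (s.erase p).card by omega)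
  have h2 : 1 ≤ ((s.erase p).erase q).card := by
    have := Finset.card_erase_of_mem hq; omega
  obtain ⟨r, hr⟩ := Finset.card_pos.mp (show 0 < ((s.erase p).erase q).card by omega)
  refine ⟨p, hp, q, (Finset.mem_erase.mp hq).2, r,
    (Finset.mem_erase.mp ((Finset.mem_erase.mp hr).2)).2, ?_, ?_, ?_⟩
  · exact fun h' => (Finset.mem_erase.mp hq).1 h'.symm
  · exact fun h' => (Finset.mem_erase.mp (Finset.mem_erase.mp hr).2).1 h'.symm
  · exact fun h' => (Finset.mem_erase.mp hr).1 h'.symm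

/-- helper function for embeddings on 5 vertices -/
def vmap {α : Type*} (a b p q r : α) : Fin 5 → α
  | ⟨0, _⟩ => a
  | ⟨1, _⟩ => b
  | ⟨2, _⟩ => p
  | ⟨3, _⟩ => q
  | ⟨4, _⟩ => r

lemma no_K2u3K1 (hfree : HFree (K2uK 3) G) (a b p q r : V)
    (hab : G.Adj a b)
    (hpa : ¬ G.Adj p a) (hpb : ¬ G.Adj p b)
    (hqa : ¬ G.Adj q a) (hqb : ¬ G.Adj q b)
    (hra : ¬ G.Adj r a) (hrb : ¬ G.Adj r b)
    (hpq : ¬ G.Adj p q) (hpr : ¬ G.Adj p r) (hqr : ¬ G.Adj q r)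
    (hpa' : p ≠ a) (hpb' : p ≠ b) (hqa' : q ≠ a) (hqb' : q ≠ b)
    (hra' : r ≠ a) (hrb' : r ≠ b) (hpq' : p ≠ q) (hpr' : p ≠ r) (hqr' : q ≠ r) : False := by
  have hab' : a ≠ b := hab.ne
  have hba' : b ≠ a := hab.ne'
  have hap' : a ≠ p := hpa'.symm
  have haq' : a ≠ q := hqa'.symm
  have har' : a ≠ r := hra'.symm
  have hbp' : b ≠ p := hpb'.symm
  have hbq' : b ≠ q := hqb'.symm
  have hbr' : b ≠ r := hrb'.symm
  have hqp' : q ≠ p := hpq'.symm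
  have hrp' : r ≠ p := hpr'.symm
  have hrq' : r ≠ q := hqr'.symm
  have hap : ¬ G.Adj a p := fun h => hpa h.symm
  have haq : ¬ G.Adj a q := fun h => hqa h.symm
  have har : ¬ G.Adj a r := fun h => hra h.symm
  have hbp : ¬ G.Adj b p := fun h => hpb h.symm
  have hbq : ¬ G.Adj b q := fun h => hqb h.symm
  have hbr : ¬ G.Adj b r := fun h => hrb h.symm
  have hqp : ¬ G.Adj q p := fun h => hpq h.symm
  have hrp : ¬ G.Adj r p := fun h => hpr h.symm
  have hrq : ¬ G.Adj r q := fun h => hqr h.symm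
  have hK : ∀ x y : Fin 5, (K2uK 3).Adj x y ↔ ((x = 0 ∧ y = 1) ∨ (x = 1 ∧ y = 0)) := by
    intro x y
    rw [K2uK, SimpleGraph.fromRel_adj]
    constructor
    · rintro ⟨hne, h | h⟩
      · exact Or.inl h
      · exact Or.inr ⟨h.2, h.1⟩
    · rintro (⟨h0, h1⟩ | ⟨h0, h1⟩)
      · subst h0; subst h1; exact ⟨by decide, Or.inl ⟨rfl, rfl⟩⟩
      · subst h0; subst h1; exact ⟨by decide, Or.inr ⟨rfl, rfl⟩⟩
  have hinj : Function.Injective (vmap a b p q r) := by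
    intro x y hxy
    fin_cases x <;> fin_cases y <;>
      first
        | rfl
        | exact absurd hxy (by assumption)
  have hiff : ∀ x y : Fin 5, G.Adj (vmap a b p q r x) (vmap a b p q r y) ↔ (K2uK 3).Adj x y := by
    intro x y
    rw [hK]
    fin_cases x <;> fin_cases y <;>
      first
        | exact iff_of_true hab (by decide)
        | exact iff_of_true hab.symm (by decide)
        | exact iff_of_false G.irrefl (by decide)
        | exact iff_of_false (by assumption) (by decide)
  exact hfree.false ⟨⟨vmap a b p q r, hinj⟩, @fun x y => hiff x y⟩

lemma numComp_eq_card_of_indep (T : Set V) (h : ∀ a ∈ T, ∀ b ∈ T, ¬ G.Adj a b) :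
    numComp (G.induce T) = Nat.card T := by
  have hbij : Function.Bijective ((G.induce T).connectedComponentMk) := by
    constructor
    · intro x y hxy
      obtain ⟨w⟩ := (SimpleGraph.ConnectedComponent.eq).mp hxy
      cases w with
      | nil => rfl
      | @cons _ z _ ha _ =>
        exact absurd ha (h _ x.2 _ z.2)
    · intro comp
      exact Quot.exists_rep comp
  unfold numComp
  exact (Nat.card_eq_of_bijective _ hbij).symm


lemma indep_bound (htough : Tough 3 G) (T : Finset V)
    (h2 : 2 ≤ T.card) (h : ∀ a ∈ T, ∀ b ∈ T, ¬ G.Adj a b) :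
    4 * T.card ≤ Fintype.card V := by
  classical
  have hS : (((↑T : Set V)ᶜ)ᶜ) = (↑T : Set V) := compl_compl _
  have hnum : numComp (G.induce ((((↑T : Set V)ᶜ))ᶜ)) = T.card := by
    rw [hS, numComp_eq_card_of_indep (↑T : Set V)
      (fun a ha b hb => h a (by exact_mod_cast ha) b (by exact_mod_cast hb))]
    rw [Finset.coe_sort_coe]; exact Nat.card_eq_finsetCard T
  have hcut : IsCutSet G ((↑T : Set V)ᶜ) := by
    unfold IsCutSet
    rw [hnum]; exact h2
  have hineq := htough _ hcut
  rw [hnum] at hineq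
  have hcardS : Nat.card ((↑T : Set V)ᶜ : Set V) = Fintype.card V - T.card := by
    rw [← Finset.coe_compl]
    have h1 : Nat.card (↑(Tᶜ) : Set V) = (Tᶜ).card := by
      rw [Finset.coe_sort_coe]; exact Nat.card_eq_finsetCard (Tᶜ)
    rw [h1, Finset.card_compl]
  rw [hcardS] at hineq
  have h3 : 3 * T.card ≤ Fintype.card V - T.card := by exact_mod_cast hineq
  have h4 : T.card ≤ Fintype.card V := Finset.card_le_univ T
  omega

lemma exists_walk_of_chain (l : List V) (b : V) :
    ∀ (a : V) (_ : (a :: l).Chain' G.Adj)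
      (_ : (a :: l).getLast (List.cons_ne_nil a l) = b),
    ∃ p : G.Walk a b, p.support = a :: l := by
  induction l with
  | nil =>
    intro a _ hb
    simp only [List.getLast_singleton] at hb
    subst hb
    exact ⟨SimpleGraph.Walk.nil, rfl⟩
  | cons c t ih =>
    intro a hch hb
    have hac : G.Adj a c := (List.isChain_cons_cons.mp hch).1
    have hb' : (c :: t).getLast (List.cons_ne_nil c t) = b := by
      rwa [List.getLast_cons (List.cons_ne_nil c t)] at hb
    obtain ⟨p, hp⟩ := ih c (List.isChain_cons_cons.mp hch).2 hb'
    exact ⟨SimpleGraph.Walk.cons hac p, by simp [hp]⟩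

lemma exists_cycle_of_list (l : List V) (h3 : 3 ≤ l.length) (hnd : l.Nodup)
    (hch : l.Chain' G.Adj) (hne : l ≠ [])
    (hcl : G.Adj (l.getLast hne) (l.head hne)) :
    ∃ (u : V) (w : G.Walk u u), w.IsCycle ∧ w.length = l.length := by
  classical
  rcases l with _ | ⟨a, l'⟩
  · simp at h3
  rcases l' with _ | ⟨c, t⟩
  · simp at h3
  have htne : t ≠ [] := by
    intro h; subst h; simp at h3
  -- b is the last vertex
  set b : V := ((a :: c :: t).getLast (List.cons_ne_nil _ _)) with hbdef
  have hbct : (c :: t).getLast (List.cons_ne_nil c t) = b := by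
    rw [hbdef, List.getLast_cons (List.cons_ne_nil c t)]
  have hbt : b ∈ t := by
    have := List.getLast_mem (List.cons_ne_nil c t)
    rw [hbct] at this
    rcases List.mem_cons.mp this with h | h
    · exfalso
      have : (c :: t).getLast (List.cons_ne_nil c t) = t.getLast htne := by
        rw [List.getLast_cons htne]
      rw [hbct] at this
      have hbmem : b ∈ t := this ▸ List.getLast_mem htne
      rw [h] at hbmem
      exact (List.nodup_cons.mp hnd.of_cons).1 hbmem
    · exact h
  have hant : a ∉ c :: t := (List.nodup_cons.mp hnd).1
  have hct : c ∉ t := (List.nodup_cons.mp hnd.of_cons).1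
  have hba : b ≠ a := fun h => hant (h ▸ List.mem_cons_of_mem c hbt)
  have hbc : b ≠ c := fun h => hct (h ▸ hbt)
  have hac : G.Adj a c := (List.isChain_cons_cons.mp hch).1
  obtain ⟨q, hq⟩ := exists_walk_of_chain (G := G) t b c (List.isChain_cons_cons.mp hch).2 hbct
  have hqpath : (SimpleGraph.Walk.cons hac q).IsPath := by
    rw [SimpleGraph.Walk.isPath_def]
    simp only [SimpleGraph.Walk.support_cons, hq]
    exact hnd
  have hcl' : G.Adj b a := hcl
  have hedge : s(b, a) ∉ (SimpleGraph.Walk.cons hac q).edges := by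
    intro hmem
    rw [SimpleGraph.Walk.edges_cons] at hmem
    rcases List.mem_cons.mp hmem with h | h
    · rw [Sym2.eq_iff] at h
      rcases h with ⟨h1, h2⟩ | ⟨h1, h2⟩
      · exact hba h1
      · exact hbc h1
    · rw [Sym2.eq_swap] at h
      have := SimpleGraph.Walk.fst_mem_support_of_mem_edges q h
      rw [hq] at this
      exact hant this
  have hcyc : (SimpleGraph.Walk.cons hcl' (SimpleGraph.Walk.cons hac q)).IsCycle := by
    rw [SimpleGraph.Walk.cons_isCycle_iff]
    exact ⟨hqpath, hedge⟩
  refine ⟨b, _, hcyc, ?_⟩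
  have hqlen : q.length = t.length := by
    have := congrArg List.length hq
    rw [SimpleGraph.Walk.length_support] at this
    simpa using this
  simp [SimpleGraph.Walk.length_cons, hqlen]

lemma reachable_eq_of_no_adj {α : Type*} {H : SimpleGraph α} {a b : α}
    (h : ∀ y, ¬ H.Adj a y) (hr : H.Reachable a b) : a = b := by
  obtain ⟨w⟩ := hr
  cases w with
  | nil => rfl
  | cons hadj _ => exact absurd hadj (h _)

end Aux
theorem stmt_18 {V : Type*} [Fintype V] (G : SimpleGraph V)
    (htough : Tough 3 G) (hfree : HFree (K2uK 3) G)
    (v : V) (c : G.Walk v v) (hc : c.IsCycle)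
    (hlongest : ∀ (u : V) (d : G.Walk u u), d.IsCycle → d.length ≤ c.length)
    (hnotham : ∃ w, w ∉ c.support) :
    numComp (G.induce ({x | x ∈ c.support}ᶜ : Set V)) ≤ 3 := by
  classical
  by_contra hgt
  push_neg at hgt
  set Sc : Set V := ({x | x ∈ c.support}ᶜ : Set V) with hScdef
  obtain ⟨k, hkdef⟩ : ∃ k', k' = numComp (G.induce Sc) := ⟨_, rfl⟩
  rw [← hkdef] at hgt
  have hk4 : 4 ≤ k := hgt
  set n : ℕ := c.length with hndef
  have hn3 : 3 ≤ n := hc.three_le_length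
  haveI : NeZero n := ⟨by omega⟩
  haveI : Fact (1 < n) := ⟨by omega⟩
  set L : List V := c.support.tail with hLdef
  have hsupp : c.support = v :: L := c.support_eq_cons
  have hLlen : L.length = n := by
    have h := c.length_support
    rw [hsupp, List.length_cons] at h
    omega
  have hLnd : L.Nodup := hc.support_nodup
  have hLne : L ≠ [] := by
    intro h
    rw [h] at hLlen
    simp at hLlen
    omega
  have hvL : L.getLast hLne = v := by
    have h := SimpleGraph.Walk.getLast_support c
    simp only [hsupp] at h
    rwa [List.getLast_cons hLne] at h
  set g : ZMod n → V := fun i => L.get ⟨i.val, by rw [hLlen]; exact ZMod.val_lt i⟩ with hgdef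
  have hgetL : ∀ (m : ℕ) (hm : m < L.length), L.get ⟨m, hm⟩ = g ((m : ℕ) : ZMod n) := by
    intro m hm
    simp only [hgdef]
    congr 1
    have hmn : m < n := by rw [hLlen] at hm; exact hm
    exact Fin.ext (by simp [ZMod.val_cast_of_lt hmn])
  have hg_inj : Function.Injective g := by
    intro i j hij
    simp only [hgdef] at hij
    have h2 := List.nodup_iff_injective_get.mp hLnd hij
    have h3 : i.val = j.val := by simpa using congrArg Fin.val h2
    have h4 : ((i.val : ℕ) : ZMod n) = ((j.val : ℕ) : ZMod n) := by rw [h3]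
    simpa [ZMod.natCast_val, ZMod.cast_id] using h4
  have hgmem : ∀ m : ZMod n, g m ∈ c.support := by
    intro m
    rw [hsupp]
    simp only [hgdef]
    exact List.mem_cons_of_mem v (L.get_mem _)
  have hmem_iff : ∀ x : V, x ∈ c.support → ∃ m : ZMod n, g m = x := by
    intro x hx
    rw [hsupp] at hx
    have hxL : x ∈ L := by
      rcases List.mem_cons.mp hx with h | h
      · subst h
        exact hvL ▸ List.getLast_mem hLne
      · exact h
    obtain ⟨⟨m, hm⟩, hget⟩ := List.mem_iff_get.mp hxL
    exact ⟨((m : ℕ) : ZMod n), by rw [← hgetL m hm]; exact hget⟩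
  have hcastval : ∀ i : ZMod n, ((i.val : ℕ) : ZMod n) = i := by
    intro i
    simp [ZMod.natCast_val, ZMod.cast_id]
  have hg_adj : ∀ i : ZMod n, G.Adj (g i) (g (i + 1)) := by
    intro i
    have hchain : (v :: L).Chain' G.Adj := by
      rw [← hsupp]
      exact SimpleGraph.Walk.isChain_adj_support c
    have hival : i.val < n := ZMod.val_lt i
    by_cases hlast : i.val + 1 < n
    · have hval1 : (i + 1).val = i.val + 1 := by
        rw [ZMod.val_add, ZMod.val_one]
        exact Nat.mod_eq_of_lt (by omega)
      have hLch : L.Chain' G.Adj := hchain.tail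
      have hadj : G.Adj (L.get ⟨i.val, by omega⟩) (L.get ⟨i.val + 1, by omega⟩) :=
        (List.isChain_iff_getElem.mp hLch) i.val (by rw [hLlen]; omega)
      rw [hgetL _ (by omega), hgetL _ (by omega)] at hadj
      have e1 : ((i.val : ℕ) : ZMod n) = i := hcastval i
      have e2 : ((i.val + 1 : ℕ) : ZMod n) = i + 1 := by
        push_cast
        rw [e1]
      rwa [e1, e2] at hadj
    · have hival' : i.val = n - 1 := by omega
      have hval0 : (i + 1).val = 0 := by
        rw [ZMod.val_add, ZMod.val_one, hival']
        have h6 : n - 1 + 1 = n := by omega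
        rw [h6]
        exact Nat.mod_self n
      have hgi : g i = v := by
        simp only [hgdef]
        have h7 : (⟨i.val, by rw [hLlen]; exact hival⟩ : Fin L.length) =
            ⟨L.length - 1, by rw [hLlen]; omega⟩ := Fin.ext (by simp [hival', hLlen])
        rw [h7, List.get_length_sub_one]
        exact hvL
      have hgi1 : g (i + 1) = L.get ⟨0, by rw [hLlen]; omega⟩ := by
        simp only [hgdef]
        congr 1
        exact Fin.ext (by simp [hval0])
      rw [hgi, hgi1]
      have h0 := (List.isChain_iff_getElem.mp hchain) 0 (by simp [hLlen]; omega)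
      simpa using h0
  have hEXC : ∀ (x : V), x ∉ c.support → ∀ i j : ZMod n, i ≠ j →
      G.Adj x (g i) → G.Adj x (g j) → ¬ G.Adj (g (i + 1)) (g (j + 1)) := by
    intro x hx i j hij hxi hxj hadj
    set d : ℕ := (i - j).val with hdDef
    have hdn : d < n := ZMod.val_lt _
    have hd1 : 1 ≤ d := by
      by_contra hcon
      push_neg at hcon
      have hd0 : (i - j) = 0 := (ZMod.val_eq_zero _).mp (by omega)
      exact hij (by linear_combination hd0)
    have hdcast : ((d : ℕ) : ZMod n) = i - j := by
      rw [hdDef, ZMod.natCast_val, ZMod.cast_id]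
    set fV : ℕ → V := fun s => if s = 0 then x else if s ≤ d then
        g (i - ((s - 1 : ℕ) : ZMod n)) else g (i + ((s - d : ℕ) : ZMod n)) with hfVdef
    have hf0 : fV 0 = x := by simp [hfVdef]
    have hP1 : ∀ s : ℕ, 1 ≤ s → s ≤ d → fV s = g (i - ((s - 1 : ℕ) : ZMod n)) := by
      intro s h1 h2
      simp only [hfVdef]
      rw [if_neg (by omega), if_pos h2]
    have hP2 : ∀ s : ℕ, d < s → fV s = g (i + ((s - d : ℕ) : ZMod n)) := by
      intro s h1
      simp only [hfVdef]
      rw [if_neg (by omega), if_neg (by omega)]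
    have hmemf : ∀ s : ℕ, 1 ≤ s → fV s ∈ c.support := by
      intro s h1
      by_cases h2 : s ≤ d
      · rw [hP1 s h1 h2]; exact hgmem _
      · rw [hP2 s (by omega)]; exact hgmem _
    have hinj : ∀ s : ℕ, s < n + 1 → ∀ t : ℕ, t < n + 1 → fV s = fV t → s = t := by
      intro s hs t ht hst
      by_cases hs0 : s = 0 <;> by_cases ht0 : t = 0
      · omega
      · exfalso; subst hs0; rw [hf0] at hst
        exact hx (hst ▸ hmemf t (by omega))
      · exfalso; subst ht0; rw [hf0] at hst
        exact hx (hst.symm ▸ hmemf s (by omega))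
      · by_cases hsd : s ≤ d <;> by_cases htd : t ≤ d
        · rw [hP1 s (by omega) hsd, hP1 t (by omega) htd] at hst
          have e := hg_inj hst
          have e2 : ((s - 1 : ℕ) : ZMod n) = ((t - 1 : ℕ) : ZMod n) := by
            linear_combination - e
          have e3 : s - 1 = t - 1 := by
            have e4 := congrArg ZMod.val e2
            rwa [ZMod.val_cast_of_lt (by omega), ZMod.val_cast_of_lt (by omega)] at e4
          omega
        · exfalso
          rw [hP1 s (by omega) hsd, hP2 t (by omega)] at hst
          have e := hg_inj hst
          have e2 : (((t - d) + (s - 1) : ℕ) : ZMod n) = 0 := by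
            push_cast
            linear_combination - e
          rw [ZMod.natCast_eq_zero_iff] at e2
          have := Nat.le_of_dvd (by omega) e2
          omega
        · exfalso
          rw [hP2 s (by omega), hP1 t (by omega) htd] at hst
          have e := hg_inj hst
          have e2 : (((s - d) + (t - 1) : ℕ) : ZMod n) = 0 := by
            push_cast
            linear_combination e
          rw [ZMod.natCast_eq_zero_iff] at e2
          have := Nat.le_of_dvd (by omega) e2
          omega
        · rw [hP2 s (by omega), hP2 t (by omega)] at hst
          have e := hg_inj hst
          have e2 : ((s - d : ℕ) : ZMod n) = ((t - d : ℕ) : ZMod n) := by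
            linear_combination e
          have e3 : s - d = t - d := by
            have e4 := congrArg ZMod.val e2
            rwa [ZMod.val_cast_of_lt (by omega), ZMod.val_cast_of_lt (by omega)] at e4
          omega
    set l : List V := (List.range (n + 1)).map fV with hlDef
    have hlen : l.length = n + 1 := by simp [hlDef]
    have hlne : l ≠ [] := by
      intro hl; rw [hl] at hlen; simp at hlen
    have hget : ∀ (m : ℕ) (hm : m < l.length), l.get ⟨m, hm⟩ = fV m := by
      intro m hm
      simp [hlDef, List.get_eq_getElem]
    have hnd : l.Nodup := by
      rw [hlDef]
      exact List.Nodup.map_on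
        (fun s hs t ht hst => hinj s (List.mem_range.mp hs) t (List.mem_range.mp ht) hst)
        List.nodup_range
    have hch : l.Chain' G.Adj := by
      refine List.isChain_iff_getElem.mpr ?_
      intro m hm
      show G.Adj (l.get ⟨m, by omega⟩) (l.get ⟨m + 1, hm⟩)
      rw [hget, hget]
      rw [hlen] at hm
      replace hm : m < n := by omega
      rcases Nat.eq_zero_or_pos m with hm0 | hmpos
      · subst hm0
        rw [hf0]
        simp only [Nat.zero_add]
        rw [hP1 1 le_rfl hd1]
        simpa using hxi
      · by_cases h2 : m + 1 ≤ d
        · rw [hP1 m hmpos (by omega), hP1 (m + 1) (by omega) h2]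
          have key : i - ((m + 1 - 1 : ℕ) : ZMod n) + 1 = i - ((m - 1 : ℕ) : ZMod n) := by
            rw [show (m + 1 - 1 : ℕ) = m from by omega, Nat.cast_sub hmpos]
            push_cast
            ring
          rw [← key]
          exact (hg_adj _).symm
        · by_cases h3 : m ≤ d
          · have hmd : m = d := by omega
            rw [hP1 m hmpos (by omega), hP2 (m + 1) (by omega)]
            have key1 : i - ((m - 1 : ℕ) : ZMod n) = j + 1 := by
              rw [hmd, Nat.cast_sub hd1, hdcast]
              push_cast
              ring
            have key2 : ((m + 1 - d : ℕ) : ZMod n) = 1 := by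
              rw [show (m + 1 - d : ℕ) = 1 from by omega]
              push_cast
              ring
            rw [key1, key2]
            exact hadj.symm
          · rw [hP2 m (by omega), hP2 (m + 1) (by omega)]
            have key : i + ((m + 1 - d : ℕ) : ZMod n) = (i + ((m - d : ℕ) : ZMod n)) + 1 := by
              rw [show (m + 1 - d : ℕ) = (m - d) + 1 from by omega]
              push_cast
              ring
            rw [key]
            exact hg_adj _
    have hheadl : l.head hlne = x := by
      have h9 : l.head hlne = l.get ⟨0, by omega⟩ := by
        rw [List.head_eq_getElem_zero hlne]
        simp [List.get_eq_getElem]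
      rw [h9, hget]
      exact hf0
    have hlastl : l.getLast hlne = g j := by
      have h8 : l.getLast hlne = l.get ⟨l.length - 1, by omega⟩ :=
        (List.get_length_sub_one _).symm
      rw [h8, hget, hlen]
      simp only [Nat.add_sub_cancel]
      rw [hP2 n hdn]
      have h7 : ((n - d : ℕ) : ZMod n) = j - i := by
        rw [Nat.cast_sub (le_of_lt hdn), ZMod.natCast_self, hdcast]
        ring
      rw [h7]
      congr 1
      ring
    have hcl : G.Adj (l.getLast hlne) (l.head hlne) := by
      rw [hheadl, hlastl]
      exact hxj.symm
    obtain ⟨u, w, hwc, hwl⟩ := exists_cycle_of_list l (by omega) hnd hch hlne hcl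
    have hle := hlongest u w hwc
    rw [hwl, hlen] at hle
    omega
  have hone : (1 : ZMod n) ≠ 0 := by
    have h1 : ((1 : ℕ) : ZMod n) ≠ 0 := by
      rw [Ne, ZMod.natCast_eq_zero_iff]
      intro hdvd
      have := Nat.le_of_dvd (by omega) hdvd
      omega
    simpa using h1
  have hA : ∀ (x : V), x ∉ c.support → ∀ i : ZMod n,
      G.Adj x (g i) → ¬ G.Adj x (g (i + 1)) := by
    intro x hx i h1 h2
    exact hEXC x hx (i + 1) i (by
      intro h
      exact hone (by linear_combination h)) h2 h1 (hg_adj (i + 1)).symm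
  -- components have no off-cycle edges
  have hNoEdge : ∀ a b : V, a ∉ c.support → b ∉ c.support → ¬ G.Adj a b := by
    intro a b ha hb hab
    have haSc : a ∈ Sc := by simp [hScdef, ha]
    have hbSc : b ∈ Sc := by simp [hScdef, hb]
    have hadj' : (G.induce Sc).Adj ⟨a, haSc⟩ ⟨b, hbSc⟩ := hab
    haveI : Finite ((G.induce Sc).ConnectedComponent) := Finite.of_surjective
      ((G.induce Sc).connectedComponentMk) (fun comp => Quot.exists_rep comp)
    haveI : Fintype ((G.induce Sc).ConnectedComponent) := Fintype.ofFinite _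
    set A := (G.induce Sc).connectedComponentMk ⟨a, haSc⟩ with hAdef
    have hBA : (G.induce Sc).connectedComponentMk ⟨b, hbSc⟩ = A :=
      (SimpleGraph.ConnectedComponent.connectedComponentMk_eq_of_adj hadj').symm
    have hcards : 3 ≤ (Finset.univ.erase A).card := by
      rw [Finset.card_erase_of_mem (Finset.mem_univ _), Finset.card_univ]
      have hk' : Fintype.card ((G.induce Sc).ConnectedComponent) = k := by
        rw [hkdef]
        unfold numComp
        rw [Nat.card_eq_fintype_card]
      omega
    obtain ⟨C1, hC1, C2, hC2, C3, hC3, h12, h13, h23⟩ := three_distinct _ hcards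
    obtain ⟨p, hp⟩ := Quot.exists_rep C1
    obtain ⟨q, hq⟩ := Quot.exists_rep C2
    obtain ⟨r, hr⟩ := Quot.exists_rep C3
    have hp' : (G.induce Sc).connectedComponentMk p = C1 := hp
    have hq' : (G.induce Sc).connectedComponentMk q = C2 := hq
    have hr' : (G.induce Sc).connectedComponentMk r = C3 := hr
    have hC1A : C1 ≠ A := (Finset.mem_erase.mp hC1).1
    have hC2A : C2 ≠ A := (Finset.mem_erase.mp hC2).1
    have hC3A : C3 ≠ A := (Finset.mem_erase.mp hC3).1
    have hdiff : ∀ (y z : ↥Sc), (G.induce Sc).connectedComponentMk y ≠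
        (G.induce Sc).connectedComponentMk z → ¬ G.Adj ↑y ↑z := by
      intro y z hne hadj2
      exact hne (SimpleGraph.ConnectedComponent.connectedComponentMk_eq_of_adj
        (by exact hadj2))
    have hdiffv : ∀ (y z : ↥Sc), (G.induce Sc).connectedComponentMk y ≠
        (G.induce Sc).connectedComponentMk z → (y : V) ≠ ↑z := by
      intro y z hne heq
      exact hne (by rw [Subtype.ext heq])
    refine no_K2u3K1 hfree a b ↑p ↑q ↑r hab ?_ ?_ ?_ ?_ ?_ ?_ ?_ ?_ ?_ ?_ ?_ ?_ ?_ ?_ ?_ ?_ ?_ ?_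
    · exact hdiff p ⟨a, haSc⟩ (by rw [hp']; exact hC1A)
    · exact hdiff p ⟨b, hbSc⟩ (by rw [hp', hBA]; exact hC1A)
    · exact hdiff q ⟨a, haSc⟩ (by rw [hq']; exact hC2A)
    · exact hdiff q ⟨b, hbSc⟩ (by rw [hq', hBA]; exact hC2A)
    · exact hdiff r ⟨a, haSc⟩ (by rw [hr']; exact hC3A)
    · exact hdiff r ⟨b, hbSc⟩ (by rw [hr', hBA]; exact hC3A)
    · exact hdiff p q (by rw [hp', hq']; exact h12)
    · exact hdiff p r (by rw [hp', hr']; exact h13)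
    · exact hdiff q r (by rw [hq', hr']; exact h23)
    · exact hdiffv p ⟨a, haSc⟩ (by rw [hp']; exact hC1A)
    · exact hdiffv p ⟨b, hbSc⟩ (by rw [hp', hBA]; exact hC1A)
    · exact hdiffv q ⟨a, haSc⟩ (by rw [hq']; exact hC2A)
    · exact hdiffv q ⟨b, hbSc⟩ (by rw [hq', hBA]; exact hC2A)
    · exact hdiffv r ⟨a, haSc⟩ (by rw [hr']; exact hC3A)
    · exact hdiffv r ⟨b, hbSc⟩ (by rw [hr', hBA]; exact hC3A)
    · exact hdiffv p q (by rw [hp', hq']; exact h12)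
    · exact hdiffv p r (by rw [hp', hr']; exact h13)
    · exact hdiffv q r (by rw [hq', hr']; exact h23)
  -- the finset of off-cycle vertices
  set W : Finset V := Finset.univ.filter (fun x => x ∉ c.support) with hWdef
  have hWmem : ∀ x : V, x ∈ W ↔ x ∉ c.support := by
    intro x; simp [hWdef]
  have hWind : ∀ x ∈ W, ∀ y ∈ W, ¬ G.Adj x y := by
    intro x hx y hy
    exact hNoEdge x y ((hWmem x).mp hx) ((hWmem y).mp hy)
  have hvmem : v ∈ L := hvL ▸ List.getLast_mem hLne
  have hkcard : k = Nat.card ↥Sc := by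
    rw [hkdef]
    exact numComp_eq_card_of_indep Sc
      (fun a ha b hb => hNoEdge a b (by simpa [hScdef] using ha) (by simpa [hScdef] using hb))
  have hScW : Sc = (↑W : Set V) := by
    ext x
    simp [hScdef, hWdef]
  have hWcard : W.card = k := by
    rw [hkcard, hScW, Finset.coe_sort_coe, Nat.card_eq_finsetCard]
  have hVcard : Fintype.card V = n + k := by
    have hsplit := Finset.card_filter_add_card_filter_not
      (s := (Finset.univ : Finset V)) (p := fun x => x ∈ c.support)
    have hfil : Finset.univ.filter (fun x => x ∈ c.support) = L.toFinset := by
      ext x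
      simp only [Finset.mem_filter, Finset.mem_univ, true_and, List.mem_toFinset, hsupp]
      constructor
      · intro hx
        rcases List.mem_cons.mp hx with h | h
        · exact h ▸ hvmem
        · exact h
      · intro hx
        exact List.mem_cons_of_mem v hx
    have hLcard : L.toFinset.card = n := by
      rw [List.toFinset_card_of_nodup hLnd, hLlen]
    have hWfil : (Finset.univ.filter (fun x => ¬ (x ∈ c.support))).card = W.card := by
      rw [hWdef]
    rw [hfil, hLcard, hWfil, hWcard, Finset.card_univ] at hsplit
    omega
  -- every vertex has a neighbor
  have hneigh : ∀ x : V, ∃ y : V, G.Adj x y := by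
    intro x
    by_contra hcon
    push_neg at hcon
    have hcard2 : 1 < Fintype.card V := by omega
    obtain ⟨z, hz⟩ := Fintype.exists_ne_of_one_lt_card hcard2 x
    haveI : Finite ((G.induce ((∅ : Set V)ᶜ)).ConnectedComponent) := Finite.of_surjective
      ((G.induce ((∅ : Set V)ᶜ)).connectedComponentMk) (fun comp => Quot.exists_rep comp)
    have hne : (G.induce ((∅ : Set V)ᶜ)).connectedComponentMk ⟨x, by simp⟩ ≠
        (G.induce ((∅ : Set V)ᶜ)).connectedComponentMk ⟨z, by simp⟩ := by
      intro heq
      have heq2 := reachable_eq_of_no_adj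
        (fun y (hadj : (G.induce ((∅ : Set V)ᶜ)).Adj ⟨x, by simp⟩ y) => hcon ↑y hadj)
        ((SimpleGraph.ConnectedComponent.eq).mp heq)
      exact hz (congrArg Subtype.val heq2).symm
    have hnt : Nontrivial ((G.induce ((∅ : Set V)ᶜ)).ConnectedComponent) := ⟨_, _, hne⟩
    have hcut : IsCutSet G (∅ : Set V) := by
      unfold IsCutSet numComp
      exact Finite.one_lt_card_iff_nontrivial.mpr hnt
    have hT := htough ∅ hcut
    have hc0 : Nat.card (∅ : Set V) = 0 := by simp
    rw [hc0] at hT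
    have h2' : (2 : ℝ) ≤ ((numComp (G.induce ((∅ : Set V)ᶜ)) : ℕ) : ℝ) := by
      exact_mod_cast hcut
    norm_num at hT
    linarith
  -- neighborhood index sets
  set P : V → Finset (ZMod n) := fun x => Finset.univ.filter (fun i => G.Adj x (g i)) with hPdef
  have hPmem : ∀ x (i : ZMod n), i ∈ P x ↔ G.Adj x (g i) := by
    intro x i; simp [hPdef]
  -- degree bound from toughness
  have hdx : ∀ x ∈ W, 4 * (1 + (P x).card) ≤ n + k := by
    intro x hxW
    have hx : x ∉ c.support := (hWmem x).mp hxW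
    set T : Finset V := insert x ((P x).image (fun i => g (i + 1))) with hTdef
    have hxnotim : x ∉ (P x).image (fun i => g (i + 1)) := by
      intro hmem
      obtain ⟨i, _, hgi⟩ := Finset.mem_image.mp hmem
      exact hx (hgi ▸ hgmem (i + 1))
    have hTcard : T.card = 1 + (P x).card := by
      rw [hTdef, Finset.card_insert_of_notMem hxnotim,
        Finset.card_image_of_injOn (fun i _ j _ hij => add_right_cancel (hg_inj hij))]
      omega
    have hPne : (P x).Nonempty := by
      obtain ⟨y, hy⟩ := hneigh x
      have hysupp : y ∈ c.support := by
        by_contra hy2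
        exact hNoEdge x y hx hy2 hy
      obtain ⟨m, hm⟩ := hmem_iff y hysupp
      exact ⟨m, (hPmem x m).mpr (hm ▸ hy)⟩
    have hT2 : 2 ≤ T.card := by
      rw [hTcard]
      have := Finset.card_pos.mpr hPne
      omega
    have hTind : ∀ a ∈ T, ∀ b ∈ T, ¬ G.Adj a b := by
      intro a ha b hb
      rw [hTdef, Finset.mem_insert] at ha hb
      rcases ha with ha | ha <;> rcases hb with hb | hb
      · rw [ha, hb]; exact G.irrefl
      · rw [ha]
        obtain ⟨i, hiP, rfl⟩ := Finset.mem_image.mp hb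
        exact hA x hx i ((hPmem x i).mp hiP)
      · rw [hb]
        obtain ⟨i, hiP, rfl⟩ := Finset.mem_image.mp ha
        exact fun h => hA x hx i ((hPmem x i).mp hiP) h.symm
      · obtain ⟨i, hiP, rfl⟩ := Finset.mem_image.mp ha
        obtain ⟨j, hjP, rfl⟩ := Finset.mem_image.mp hb
        by_cases hij : i = j
        · subst hij; exact G.irrefl
        · exact hEXC x hx i j hij ((hPmem x i).mp hiP) ((hPmem x j).mp hjP)
    have hbd := indep_bound htough T hT2 hTind
    rw [hTcard, hVcard] at hbd
    exact hbd
  -- cover: every edge of the cycle is dominated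
  set B : Finset (ZMod n) := Finset.univ.filter (fun i => ∃ x ∈ W, G.Adj x (g i)) with hBdef
  have hBmem : ∀ i : ZMod n, i ∈ B ↔ ∃ x ∈ W, G.Adj x (g i) := by
    intro i; simp [hBdef]
  have hcov : ∀ i : ZMod n, i ∈ B ∨ (i + 1) ∈ B := by
    intro i
    by_contra hcon
    push_neg at hcon
    obtain ⟨h1, h2⟩ := hcon
    have h1' : ∀ x ∈ W, ¬ G.Adj x (g i) := by
      intro x hxW hadj
      exact h1 ((hBmem i).mpr ⟨x, hxW, hadj⟩)
    have h2' : ∀ x ∈ W, ¬ G.Adj x (g (i + 1)) := by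
      intro x hxW hadj
      exact h2 ((hBmem (i + 1)).mpr ⟨x, hxW, hadj⟩)
    obtain ⟨p, hpW, q, hqW, r, hrW, hpq, hpr, hqr⟩ := three_distinct W
      (by rw [hWcard]; omega)
    have hWnots : ∀ x ∈ W, ∀ m : ZMod n, x ≠ g m := by
      intro x hxW m h
      exact ((hWmem x).mp hxW) (h ▸ hgmem m)
    exact no_K2u3K1 hfree (g i) (g (i + 1)) p q r (hg_adj i)
      (h1' p hpW) (h2' p hpW) (h1' q hqW) (h2' q hqW) (h1' r hrW) (h2' r hrW)
      (hWind p hpW q hqW) (hWind p hpW r hrW) (hWind q hqW r hrW)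
      (hWnots p hpW i) (hWnots p hpW (i + 1)) (hWnots q hqW i) (hWnots q hqW (i + 1))
      (hWnots r hrW i) (hWnots r hrW (i + 1)) hpq hpr hqr
  have hZcard : Fintype.card (ZMod n) = n := ZMod.card n
  have hB2 : n ≤ 2 * B.card := by
    have hsub : Finset.univ ⊆ B ∪ B.image (fun i => i - 1) := by
      intro i _
      rcases hcov i with h | h
      · exact Finset.mem_union_left _ h
      · refine Finset.mem_union_right _ (Finset.mem_image.mpr ⟨i + 1, h, by ring⟩)
    calc n = (Finset.univ : Finset (ZMod n)).card := by rw [Finset.card_univ, hZcard]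
    _ ≤ (B ∪ B.image (fun i => i - 1)).card := Finset.card_le_card hsub
    _ ≤ B.card + (B.image (fun i => i - 1)).card := Finset.card_union_le _ _
    _ ≤ B.card + B.card := by
        have := Finset.card_image_le (s := B) (f := fun i => i - 1)
        omega
    _ = 2 * B.card := by ring
  -- each vertex of B is adjacent to all but at most two of W
  have hwi : ∀ i ∈ B, k ≤ (W.filter (fun x => G.Adj x (g i))).card + 2 := by
    intro i hiB
    obtain ⟨x0, hx0W, hx0adj⟩ := (hBmem i).mp hiB
    by_contra hcon
    push_neg at hcon
    have hsplit := Finset.card_filter_add_card_filter_not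
      (s := W) (p := fun x => G.Adj x (g i))
    have h3 : 3 ≤ (W.filter (fun x => ¬ G.Adj x (g i))).card := by
      rw [hWcard] at hsplit
      omega
    obtain ⟨p, hp, q, hq, r, hr, hpq, hpr, hqr⟩ := three_distinct _ h3
    obtain ⟨hpW, hpn⟩ := Finset.mem_filter.mp hp
    obtain ⟨hqW, hqn⟩ := Finset.mem_filter.mp hq
    obtain ⟨hrW, hrn⟩ := Finset.mem_filter.mp hr
    have hnex0 : ∀ x ∈ W, (¬ G.Adj x (g i)) → x ≠ x0 := by
      intro x _ hxn h
      exact hxn (h ▸ hx0adj)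
    have hWnots : ∀ x ∈ W, x ≠ g i := by
      intro x hxW h
      exact ((hWmem x).mp hxW) (h ▸ hgmem i)
    exact no_K2u3K1 hfree x0 (g i) p q r hx0adj
      (hWind p hpW x0 hx0W) hpn (hWind q hqW x0 hx0W) hqn (hWind r hrW x0 hx0W) hrn
      (hWind p hpW q hqW) (hWind p hpW r hrW) (hWind q hqW r hrW)
      (hnex0 p hpW hpn) (hWnots p hpW) (hnex0 q hqW hqn) (hWnots q hqW)
      (hnex0 r hrW hrn) (hWnots r hrW) hpq hpr hqr
  -- double counting
  set S1 : ℕ := ∑ x ∈ W, (P x).card with hS1def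
  have hswap : ∑ i : ZMod n, (W.filter (fun x => G.Adj x (g i))).card = S1 := by
    rw [hS1def]
    calc ∑ i : ZMod n, (W.filter (fun x => G.Adj x (g i))).card
        = ∑ i : ZMod n, ∑ x ∈ W, (if G.Adj x (g i) then 1 else 0) := by
          refine Finset.sum_congr rfl (fun i _ => ?_)
          rw [Finset.card_filter]
      _ = ∑ x ∈ W, ∑ i : ZMod n, (if G.Adj x (g i) then 1 else 0) := Finset.sum_comm
      _ = ∑ x ∈ W, (P x).card := by
          refine Finset.sum_congr rfl (fun x _ => ?_)
          rw [hPdef, Finset.card_filter]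
  have h92 : B.card * k ≤ S1 + 2 * B.card := by
    have hle1 : ∑ _i ∈ B, k ≤ ∑ i ∈ B, ((W.filter (fun x => G.Adj x (g i))).card + 2) :=
      Finset.sum_le_sum (fun i hi => hwi i hi)
    have hle2 : ∑ i ∈ B, (W.filter (fun x => G.Adj x (g i))).card ≤
        ∑ i : ZMod n, (W.filter (fun x => G.Adj x (g i))).card :=
      Finset.sum_le_sum_of_subset (Finset.subset_univ B)
    rw [Finset.sum_const, smul_eq_mul, Finset.sum_add_distrib, Finset.sum_const,
      smul_eq_mul] at hle1
    rw [hswap] at hle2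
    linarith only [hle1, hle2]
  have h93 : 4 * k + 4 * S1 ≤ k * (n + k) := by
    have hle : ∑ x ∈ W, (4 * (1 + (P x).card)) ≤ ∑ _x ∈ W, (n + k) :=
      Finset.sum_le_sum (fun x hx => hdx x hx)
    have hexp : ∑ x ∈ W, (4 * (1 + (P x).card)) = 4 * W.card + 4 * S1 := by
      simp only [mul_add, mul_one]
      rw [Finset.sum_add_distrib, Finset.sum_const, smul_eq_mul, ← Finset.mul_sum, hS1def]
      ring
    rw [hexp, Finset.sum_const, smul_eq_mul, hWcard] at hle
    linarith only [hle]
  have hW4 : 4 * k ≤ n + k := by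
    have := indep_bound htough W (by omega) hWind
    omega
  -- endgame
  clear_value S1 B P W g L n Sc
  rcases (show k = 4 ∨ 5 ≤ k by omega) with hk | hk5
  · -- k = 4 : tightness
    subst hk
    have hc2 : 2 * B.card ≤ S1 := by linarith only [h92]
    have hc3 : S1 ≤ n := by linarith only [h93]
    have hS1n : S1 = n := by linarith only [hB2, hc2, hc3]
    have hBn : 2 * B.card = n := by linarith only [hB2, hc2, hc3]
    have hxeq : ∀ x ∈ W, 4 * (P x).card = n := by
      by_contra hcon
      push_neg at hcon
      obtain ⟨x0, hx0, hne0⟩ := hcon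
      have hstrict : ∑ x ∈ W, (4 * (P x).card) < ∑ _x ∈ W, n :=
        Finset.sum_lt_sum (fun x hx => by linarith only [hdx x hx])
          ⟨x0, hx0, lt_of_le_of_ne (by linarith only [hdx x0 hx0]) hne0⟩
      rw [Finset.sum_const, smul_eq_mul, hWcard, ← Finset.mul_sum, ← hS1def] at hstrict
      linarith only [hstrict, hS1n]
    have hBBm : ∀ i : ZMod n, i ∈ B → i + 1 ∈ B → False := by
      have hImage : (B.image (fun i => i - 1)).card = B.card :=
        Finset.card_image_of_injective _ (fun a b hab => by linear_combination hab)
      have hsub : Finset.univ ⊆ B ∪ B.image (fun i => i - 1) := by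
        intro i _
        rcases hcov i with h | h
        · exact Finset.mem_union_left _ h
        · exact Finset.mem_union_right _ (Finset.mem_image.mpr ⟨i + 1, h, by ring⟩)
      have hUI := Finset.card_union_add_card_inter B (B.image (fun i => i - 1))
      have hUcard : n ≤ (B ∪ B.image (fun i => i - 1)).card := by
        calc n = (Finset.univ : Finset (ZMod n)).card := by rw [Finset.card_univ, hZcard]
        _ ≤ _ := Finset.card_le_card hsub
      have hIempty : (B ∩ B.image (fun i => i - 1)).card = 0 := by
        have hUB : (B ∪ B.image (fun i => i - 1)).card ≤ n := by
          calc (B ∪ B.image (fun i => i - 1)).card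
              ≤ (Finset.univ : Finset (ZMod n)).card := Finset.card_le_card
                (Finset.subset_univ _)
            _ = n := by rw [Finset.card_univ, hZcard]
        have : (B ∩ B.image (fun i => i - 1)).card ≤ 0 := by
          linarith only [hUI, hUcard, hUB, hImage, hBn]
        omega
      intro i hiB hi1B
      have hmem : i ∈ B ∩ B.image (fun i => i - 1) := Finset.mem_inter.mpr ⟨hiB,
        Finset.mem_image.mpr ⟨i + 1, hi1B, by ring⟩⟩
      rw [Finset.card_eq_zero.mp hIempty] at hmem
      exact absurd hmem (Finset.notMem_empty i)
    have hWpos : 0 < W.card := by rw [hWcard]; norm_num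
    obtain ⟨x1, hx1W⟩ := Finset.card_pos.mp hWpos
    set T : Finset V := W ∪ (P x1).image (fun i => g (i + 1)) with hTdef
    have hdisj : Disjoint W ((P x1).image (fun i => g (i + 1))) := by
      rw [Finset.disjoint_left]
      intro a haW hamem
      obtain ⟨i, _, rfl⟩ := Finset.mem_image.mp hamem
      exact ((hWmem _).mp haW) (hgmem (i + 1))
    have hTcard : T.card = 4 + (P x1).card := by
      rw [hTdef, Finset.card_union_of_disjoint hdisj, hWcard,
        Finset.card_image_of_injOn (fun i _ j _ hij => add_right_cancel (hg_inj hij))]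
    have hTind : ∀ a ∈ T, ∀ b ∈ T, ¬ G.Adj a b := by
      intro a ha b hb
      rw [hTdef, Finset.mem_union] at ha hb
      rcases ha with ha | ha <;> rcases hb with hb | hb
      · exact hWind a ha b hb
      · obtain ⟨i, hiP, rfl⟩ := Finset.mem_image.mp hb
        have hiB : i ∈ B := (hBmem i).mpr ⟨x1, hx1W, (hPmem x1 i).mp hiP⟩
        intro hadj
        exact hBBm i hiB ((hBmem _).mpr ⟨a, ha, hadj⟩)
      · obtain ⟨i, hiP, rfl⟩ := Finset.mem_image.mp ha
        have hiB : i ∈ B := (hBmem i).mpr ⟨x1, hx1W, (hPmem x1 i).mp hiP⟩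
        intro hadj
        exact hBBm i hiB ((hBmem _).mpr ⟨b, hb, hadj.symm⟩)
      · obtain ⟨i, hiP, rfl⟩ := Finset.mem_image.mp ha
        obtain ⟨j, hjP, rfl⟩ := Finset.mem_image.mp hb
        by_cases hij : i = j
        · subst hij; exact G.irrefl
        · exact hEXC x1 ((hWmem x1).mp hx1W) i j hij ((hPmem x1 i).mp hiP)
            ((hPmem x1 j).mp hjP)
    have hbound := indep_bound htough T (by rw [hTcard]; omega) hTind
    rw [hTcard, hVcard] at hbound
    linarith only [hbound, hxeq x1 hx1W]
  · -- k ≥ 5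
    obtain ⟨m, rfl⟩ : ∃ m, k = m + 5 := ⟨k - 5, by omega⟩
    have e1 : (m + 3) * B.card ≤ S1 := by
      have expand : B.card * (m + 5) = (m + 3) * B.card + 2 * B.card := by ring
      linarith only [h92, expand]
    have f1 : (m + 3) * n ≤ (m + 3) * (2 * B.card) := Nat.mul_le_mul_left _ hB2
    have f2 : 2 * ((m + 3) * n) ≤ 4 * S1 := by
      have expand2 : (m + 3) * (2 * B.card) = 2 * ((m + 3) * B.card) := by ring
      linarith only [f1, e1, expand2]
    have e2 : (m + 1) * n ≤ (m + 1) * (m + 5) := by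
      have x1 : (m + 5) * (n + (m + 5)) = (m + 5) * n + (m + 5) * (m + 5) := by ring
      have x2 : 2 * ((m + 3) * n) = (m + 5) * n + (m + 1) * n := by ring
      have x3 : (m + 1) * (m + 5) + 4 * (m + 5) = (m + 5) * (m + 5) := by ring
      linarith only [f2, h93, x1, x2, x3]
    have e3 : n ≤ m + 5 := Nat.le_of_mul_le_mul_left e2 (Nat.succ_pos m)
    linarith only [hW4, e3]
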